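/- Let u = αx + βy + γz with α, β, γ ∈ O_K and ν_D(u) = 0 (note τ(u) = -u, so u is a (-1)-symmetric unit of O_D). Then α ∈ O_K^× and there exists an invertible t ∈ D with u = τ(t)·(αx)·t; that is, ⟨u⟩ ≅ ⟨αx⟩ as skew-hermitian forms over (D, τ). -/

import Mathlib

noncomputable section

/-- A surjective discrete valuation `ν : K → ℤ` on a field `K`
(the value of `ν` at `0` is irrelevant: only nonzero elements are constrained). -/
structure DVal (K : Type) [Field K] : Type where
  ν : K → ℤ
  ν_mul : ∀ x y : K, x ≠ 0 → y ≠ 0 → ν (x * y) = ν x + ν y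
  ν_add : ∀ x y : K, x ≠ 0 → y ≠ 0 → x + y ≠ 0 → min (ν x) (ν y) ≤ ν (x + y)
  ν_one : ν 1 = 0
  ν_surj : ∀ n : ℤ, ∃ x : K, x ≠ 0 ∧ ν x = n

namespace DVal

variable {K : Type} [Field K]

/-- `x` belongs to the valuation ring `O_K`. -/
def Int (V : DVal K) (x : K) : Prop := x = 0 ∨ 0 ≤ V.ν x

/-- `x` is a unit of the valuation ring `O_K`. -/
def IntUnit (V : DVal K) (x : K) : Prop := x ≠ 0 ∧ V.ν x = 0

/-- `x` belongs to the maximal ideal `m_K` of the valuation ring `O_K`. -/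
def MaxIdeal (V : DVal K) (x : K) : Prop := x = 0 ∨ 1 ≤ V.ν x

/-- `K` is complete with respect to the valuation `ν`: every Cauchy sequence converges. -/
def IsComplete (V : DVal K) : Prop :=
  ∀ f : ℕ → K,
    (∀ M : ℤ, ∃ N : ℕ, ∀ m n : ℕ, N ≤ m → N ≤ n →
      f m - f n = 0 ∨ M ≤ V.ν (f m - f n)) →
    ∃ L : K, ∀ M : ℤ, ∃ N : ℕ, ∀ n : ℕ, N ≤ n →
      f n - L = 0 ∨ M ≤ V.ν (f n - L)

/-- The residue field `k = O_K/m_K` has characteristic different from `2`,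
i.e. `2` is a unit of the valuation ring `O_K`. -/
def ResCharNeTwo (V : DVal K) : Prop := (2 : K) ≠ 0 ∧ V.ν 2 = 0

end DVal

/-- The reduced norm of a quaternion `u = δ + αx + βy + γz ∈ ℍ[K,a,b]`:
`Nrd u = u·τ(u) = δ² - aα² - bβ² + abγ²`. -/
def qnrd {K : Type} [Field K] (a b : K) (u : QuaternionAlgebra K a 0 b) : K :=
  u.re ^ 2 - a * u.imI ^ 2 - b * u.imJ ^ 2 + a * b * u.imK ^ 2

/-- The canonical involution `τ(δ + αx + βy + γz) = δ - αx - βy - γz` of `ℍ[K,a,b]`. -/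
def qtau {K : Type} [Field K] {a b : K} (u : QuaternionAlgebra K a 0 b) :
    QuaternionAlgebra K a 0 b :=
  ⟨u.re, -u.imI, -u.imJ, -u.imK⟩

/-- The norm form `⟨1,-a,-b,ab⟩` of `ℍ[K,a,b]` is anisotropic over `K`
(equivalently, `ℍ[K,a,b]` is a division ring). -/
def QAniso {K : Type} [Field K] (a b : K) : Prop :=
  ∀ d e f g : K, d ^ 2 - a * e ^ 2 - b * f ^ 2 + a * b * g ^ 2 = 0 →
    d = 0 ∧ e = 0 ∧ f = 0 ∧ g = 0

/-- The valuation `ν_D(u) = (1/2)·ν_K(Nrd u)` of the quaternion division algebra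
`D = ℍ[K,a,b]` (at nonzero `u`). -/
def qnu {K : Type} [Field K] (V : DVal K) (a b : K) (u : QuaternionAlgebra K a 0 b) : ℚ :=
  (V.ν (qnrd a b u) : ℚ) / 2


namespace DVal

variable {K : Type} [Field K] (V : DVal K)

/-- `x = 0` or `ν x ≥ M`. -/
def Vge (x : K) (M : ℤ) : Prop := x = 0 ∨ M ≤ V.ν x

variable {V}

theorem nu_neg_one : V.ν (-1 : K) = 0 := by
  have h := V.ν_mul (-1) (-1) (by norm_num) (by norm_num)
  rw [show ((-1 : K) * -1) = 1 by ring, V.ν_one] at h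
  omega

theorem nu_neg {x : K} (hx : x ≠ 0) : V.ν (-x) = V.ν x := by
  have h := V.ν_mul (-1) x (by norm_num) hx
  rw [neg_one_mul] at h
  rw [h, nu_neg_one]; ring

theorem nu_inv {x : K} (hx : x ≠ 0) : V.ν x⁻¹ = -V.ν x := by
  have h := V.ν_mul x x⁻¹ hx (inv_ne_zero hx)
  rw [mul_inv_cancel₀ hx, V.ν_one] at h
  omega

theorem Vge_mono {x : K} {M N : ℤ} (h : N ≤ M) (hx : V.Vge x M) : V.Vge x N := by
  rcases hx with h0 | h0
  · exact Or.inl h0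
  · exact Or.inr (le_trans h h0)

theorem Vge_neg {x : K} {M : ℤ} (hx : V.Vge x M) : V.Vge (-x) M := by
  rcases hx with h0 | h0
  · exact Or.inl (by rw [h0, neg_zero])
  · by_cases hx0 : x = 0
    · exact Or.inl (by rw [hx0, neg_zero])
    · exact Or.inr (by rwa [nu_neg hx0])

theorem Vge_add {x y : K} {M : ℤ} (hx : V.Vge x M) (hy : V.Vge y M) :
    V.Vge (x + y) M := by
  rcases hx with h0 | h0
  · rwa [h0, zero_add]
  rcases hy with h1 | h1
  · rw [h1, add_zero]; exact Or.inr h0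
  by_cases hx0 : x = 0
  · rw [hx0, zero_add]; exact Or.inr h1
  by_cases hy0 : y = 0
  · rw [hy0, add_zero]; exact Or.inr h0
  by_cases hxy : x + y = 0
  · exact Or.inl hxy
  · exact Or.inr (le_trans (le_min h0 h1) (V.ν_add x y hx0 hy0 hxy))

theorem Vge_sub {x y : K} {M : ℤ} (hx : V.Vge x M) (hy : V.Vge y M) :
    V.Vge (x - y) M := by
  rw [sub_eq_add_neg]; exact Vge_add hx (Vge_neg hy)

theorem Vge_mul {x y : K} {M N : ℤ} (hx : V.Vge x M) (hy : V.Vge y N) :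
    V.Vge (x * y) (M + N) := by
  rcases hx with h0 | h0
  · exact Or.inl (by rw [h0, zero_mul])
  rcases hy with h1 | h1
  · exact Or.inl (by rw [h1, mul_zero])
  by_cases hx0 : x = 0
  · exact Or.inl (by rw [hx0, zero_mul])
  by_cases hy0 : y = 0
  · exact Or.inl (by rw [hy0, mul_zero])
  · exact Or.inr (by rw [V.ν_mul x y hx0 hy0]; omega)

theorem nu_add_eq {x y : K} (hx : x ≠ 0) (hy0 : y ≠ 0) (hy : V.ν x < V.ν y) :
    x + y ≠ 0 ∧ V.ν (x + y) = V.ν x := by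
  have hne : x + y ≠ 0 := by
    intro h0
    have : y = -x := by linear_combination h0
    rw [this, nu_neg hx] at hy
    omega
  have h1 := V.ν_add x y hx hy0 hne
  rw [min_eq_left hy.le] at h1
  have h2 := V.ν_add (x + y) (-y) hne (neg_ne_zero.2 hy0)
    (by rw [add_neg_cancel_right]; exact hx)
  rw [add_neg_cancel_right, nu_neg hy0] at h2
  refine ⟨hne, ?_⟩
  rcases min_le_iff.mp h2 with h | h
  · omega
  · omega

theorem unit_of_near_one {x : K} (h : V.Vge (x - 1) 1) : x ≠ 0 ∧ V.ν x = 0 := by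
  by_cases hx1 : x - 1 = 0
  · have : x = 1 := by linear_combination hx1
    rw [this]; exact ⟨one_ne_zero, V.ν_one⟩
  · have h' : 1 ≤ V.ν (x - 1) := by
      rcases h with h0 | h0
      · exact absurd h0 hx1
      · exact h0
    have := nu_add_eq (V := V) (x := (1 : K)) (y := x - 1) one_ne_zero hx1
      (by rw [V.ν_one]; omega)
    rw [show (1 : K) + (x - 1) = x by ring, V.ν_one] at this
    exact this

theorem eq_zero_of_forall_Vge {x : K} (h : ∀ M : ℤ, V.Vge x M) : x = 0 := by
  by_contra hx
  rcases h (V.ν x + 1) with h0 | h0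
  · exact hx h0
  · omega

theorem toNat_le_two_pow (M : ℤ) : M ≤ 2 ^ M.toNat := by
  rcases le_or_gt M 0 with h | h
  · exact h.trans (by positivity)
  · calc M = (M.toNat : ℤ) := (Int.toNat_of_nonneg h.le).symm
      _ ≤ 2 ^ M.toNat := by exact_mod_cast (Nat.lt_two_pow_self (n := M.toNat)).le

end DVal

/-- Newton iteration for the square root of `w`, starting at `1`. -/
def dvalNewton {K : Type} [Field K] (w : K) : ℕ → K
  | 0 => 1
  | n + 1 => (dvalNewton w n + w / dvalNewton w n) / 2

/-- Hensel's lemma for square roots of 1-units. -/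
theorem DVal.sqrt_exists {K : Type} [Field K] {V : DVal K}
    (hcomp : V.IsComplete) (hchar : V.ResCharNeTwo)
    {w : K} (hw : V.Vge (w - 1) 1) : ∃ e : K, e ^ 2 = w ∧ V.Vge (e - 1) 1 := by
  obtain ⟨h2ne, h2v⟩ := hchar
  set f : ℕ → K := dvalNewton w with hfdef
  have hfs : ∀ n, f (n + 1) = (f n + w / f n) / 2 := fun n => rfl
  have key : ∀ n, V.Vge (f n - 1) 1 ∧ V.Vge (f n ^ 2 - w) (2 ^ n) := by
    intro n
    induction n with
    | zero =>
      constructor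
      · exact Or.inl (by show (1 : K) - 1 = 0; ring)
      · have h1 := Vge_neg hw
        have e0 : f 0 ^ 2 - w = -(w - 1) := by show (1:K)^2 - w = -(w-1); ring
        rw [e0]; simpa using h1
    | succ n ih =>
      obtain ⟨ih1, ih2⟩ := ih
      obtain ⟨hfn0, hfnv⟩ := unit_of_near_one ih1
      have h2fn : (2 : K) * f n ≠ 0 := mul_ne_zero h2ne hfn0
      have hinv : V.ν ((2 : K) * f n)⁻¹ = 0 := by
        rw [nu_inv h2fn, V.ν_mul 2 (f n) h2ne hfn0, h2v, hfnv]; norm_num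
      have hinv' : V.Vge ((2 : K) * f n)⁻¹ 0 := Or.inr hinv.ge
      have e1 : f (n + 1) - 1 = ((f n - 1) ^ 2 + (w - 1)) * ((2 : K) * f n)⁻¹ := by
        rw [hfs]; field_simp; ring
      have e2 : f (n + 1) ^ 2 - w = (f n ^ 2 - w) ^ 2 * (((2 : K) * f n) ^ 2)⁻¹ := by
        rw [hfs]; field_simp; ring
      have hsq1 : V.Vge ((f n - 1) ^ 2) 1 := by
        rw [sq]
        exact Vge_mono (by omega) (Vge_mul ih1 ih1)
      constructor
      · rw [e1]
        have := Vge_mul (Vge_add hsq1 hw) hinv'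
        simpa using this
      · rw [e2]
        have hinv2 : V.Vge ((((2 : K) * f n) ^ 2)⁻¹) 0 := by
          refine Or.inr ?_
          rw [nu_inv (pow_ne_zero 2 h2fn), sq,
            V.ν_mul _ _ h2fn h2fn, V.ν_mul 2 (f n) h2ne hfn0, h2v, hfnv]
          norm_num
        have hr : V.Vge ((f n ^ 2 - w) ^ 2) (2 ^ (n + 1)) := by
          rw [sq]
          have := Vge_mul ih2 ih2
          rwa [show (2:ℤ) ^ n + 2 ^ n = 2 ^ (n+1) by ring] at this
        have := Vge_mul hr hinv2
        simpa using this
  have hdiff : ∀ n, V.Vge (f (n + 1) - f n) (2 ^ n) := by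
    intro n
    obtain ⟨h1, h2⟩ := key n
    obtain ⟨hfn0, hfnv⟩ := unit_of_near_one h1
    have h2fn : (2 : K) * f n ≠ 0 := mul_ne_zero h2ne hfn0
    have hinv : V.Vge ((2 : K) * f n)⁻¹ 0 := by
      refine Or.inr ?_
      rw [nu_inv h2fn, V.ν_mul 2 (f n) h2ne hfn0, h2v, hfnv]; norm_num
    have e3 : f (n + 1) - f n = -(f n ^ 2 - w) * ((2 : K) * f n)⁻¹ := by
      rw [hfs]; field_simp; ring
    rw [e3]
    have := Vge_mul (Vge_neg h2) hinv
    simpa using this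
  have hcauchy : ∀ n m : ℕ, n ≤ m → V.Vge (f m - f n) (2 ^ n) := by
    intro n m hnm
    induction m, hnm using Nat.le_induction with
    | base => exact Or.inl (by ring)
    | succ m hm ih =>
      have e4 : f (m + 1) - f n = (f (m + 1) - f m) + (f m - f n) := by ring
      rw [e4]
      exact Vge_add (Vge_mono (pow_le_pow_right₀ one_le_two hm) (hdiff m)) ih
  have hpow_mono : ∀ {p q : ℕ}, p ≤ q → (2:ℤ)^p ≤ 2^q :=
    fun h => pow_le_pow_right₀ one_le_two h
  obtain ⟨L, hL⟩ := hcomp f (by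
    intro M
    refine ⟨M.toNat, fun m n hm hn => ?_⟩
    have hb : M ≤ 2 ^ M.toNat := toNat_le_two_pow M
    rcases le_total n m with h | h
    · exact Vge_mono (hb.trans (hpow_mono hn)) (hcauchy n m h)
    · have := Vge_neg (hcauchy m n h)
      rw [neg_sub] at this
      exact Vge_mono (hb.trans (hpow_mono hm)) this)
  have hL' : ∀ M : ℤ, ∃ N : ℕ, ∀ n, N ≤ n → V.Vge (f n - L) M := hL
  have hL1 : V.Vge (L - 1) 1 := by
    obtain ⟨N, hN⟩ := hL' 1
    have h1 := hN N le_rfl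
    have e5 : L - 1 = -(f N - L) + (f N - 1) := by ring
    rw [e5]
    exact Vge_add (Vge_neg h1) (key N).1
  refine ⟨L, ?_, hL1⟩
  have hLsq : ∀ M : ℤ, V.Vge (L ^ 2 - w) M := by
    intro M
    obtain ⟨N, hN⟩ := hL' M
    set n := max N M.toNat with hn
    have h1 : V.Vge (f n - L) M := hN n (le_max_left _ _)
    have h2 : V.Vge (f n ^ 2 - w) M :=
      Vge_mono ((toNat_le_two_pow M).trans (hpow_mono (le_max_right _ _))) (key n).2
    obtain ⟨hfne, hfv⟩ := unit_of_near_one (key n).1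
    obtain ⟨hLne, hLv⟩ := unit_of_near_one hL1
    have h3 : V.Vge (L + f n) 0 := Vge_add (Or.inr hLv.ge) (Or.inr hfv.ge)
    have e6 : L ^ 2 - w = -(f n - L) * (L + f n) + (f n ^ 2 - w) := by ring
    rw [e6]
    refine Vge_add ?_ h2
    have := Vge_mul (Vge_neg h1) h3
    simpa using this
  have := DVal.eq_zero_of_forall_Vge hLsq
  linear_combination this

theorem qtau_smul {K : Type} [Field K] {a b : K} (r : K) (t : QuaternionAlgebra K a 0 b) :
    qtau (r • t) = r • qtau t := by
  ext <;> simp [qtau] <;> ring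

theorem qtau_mul_self {K : Type} [Field K] {a b : K} (t : QuaternionAlgebra K a 0 b) :
    t * qtau t = (qnrd a b t) • 1 ∧ qtau t * t = (qnrd a b t) • 1 := by
  constructor <;>
    (ext <;>
      simp [qtau, qnrd, QuaternionAlgebra.re_mul, QuaternionAlgebra.imI_mul,
        QuaternionAlgebra.imJ_mul, QuaternionAlgebra.imK_mul] <;> ring)

theorem key_alg {K : Type} [Field K] (a b α β γ e : K)
    (H : a * α ^ 2 * e ^ 2 = a * α ^ 2 + b * β ^ 2 - a * b * γ ^ 2) :
    qtau (⟨a * α * (1 + e), 0, a * γ, β⟩ : QuaternionAlgebra K a 0 b) *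
        (⟨0, α, 0, 0⟩ : QuaternionAlgebra K a 0 b) * ⟨a * α * (1 + e), 0, a * γ, β⟩ =
      (2 * a ^ 2 * α ^ 2 * (1 + e)) • (⟨0, α, β, γ⟩ : QuaternionAlgebra K a 0 b) := by
  ext
  · simp [qtau, QuaternionAlgebra.re_mul, QuaternionAlgebra.imI_mul,
      QuaternionAlgebra.imJ_mul, QuaternionAlgebra.imK_mul]
    ring
  · simp [qtau, QuaternionAlgebra.re_mul, QuaternionAlgebra.imI_mul,
      QuaternionAlgebra.imJ_mul, QuaternionAlgebra.imK_mul]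
    linear_combination a * α * H
  · simp [qtau, QuaternionAlgebra.re_mul, QuaternionAlgebra.imI_mul,
      QuaternionAlgebra.imJ_mul, QuaternionAlgebra.imK_mul]
    ring
  · simp [qtau, QuaternionAlgebra.re_mul, QuaternionAlgebra.imI_mul,
      QuaternionAlgebra.imJ_mul, QuaternionAlgebra.imK_mul]
    ring

/-- if `u = αx + βy + γz` is a `(-1)`-symmetric unit of `O_D` then `α ∈ O_K^×`
and `⟨u⟩ ≅ ⟨αx⟩` over `(D, τ)`. -/
theorem stmt_5 (K : Type) [Field K] (V : DVal K)
    -- K is complete with residue field of characteristic ≠ 2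
    (hcomp : V.IsComplete) (hchar : V.ResCharNeTwo)
    -- D = ℍ[K,a,ϖ] with a ∈ O_K^×, ϖ a uniformizer, D a division ring
    (a ϖ : K) (ha0 : a ≠ 0) (hva : V.ν a = 0) (hϖ0 : ϖ ≠ 0) (hvϖ : V.ν ϖ = 1)
    (haniso : QAniso a ϖ)
    -- u = αx + βy + γz with coordinates in O_K and ν_D(u) = 0
    (α β γ : K) (hα : V.Int α) (hβ : V.Int β) (hγ : V.Int γ)
    (hu0 : (⟨0, α, β, γ⟩ : QuaternionAlgebra K a 0 ϖ) ≠ 0)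
    (hval : qnu V a ϖ (⟨0, α, β, γ⟩ : QuaternionAlgebra K a 0 ϖ) = 0) :
    V.IntUnit α ∧ ∃ t : QuaternionAlgebra K a 0 ϖ, IsUnit t ∧
      (⟨0, α, β, γ⟩ : QuaternionAlgebra K a 0 ϖ) =
        qtau t * (⟨0, α, 0, 0⟩ : QuaternionAlgebra K a 0 ϖ) * t := by
  classical
  -- the reduced norm of u is nonzero
  set u : QuaternionAlgebra K a 0 ϖ := ⟨0, α, β, γ⟩ with hu
  have hn0 : qnrd a ϖ u ≠ 0 := by
    intro h
    have h' : (0:K) ^ 2 - a * α ^ 2 - ϖ * β ^ 2 + a * ϖ * γ ^ 2 = 0 := by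
      simpa [qnrd, u] using h
    obtain ⟨-, h1, h2, h3⟩ := haniso 0 α β γ h'
    apply hu0
    rw [hu, h1, h2, h3]
    rfl
  have hvn0 : V.ν (qnrd a ϖ u) = 0 := by
    have : ((V.ν (qnrd a ϖ u) : ℚ)) / 2 = 0 := hval
    have h2 : ((V.ν (qnrd a ϖ u) : ℚ)) = 0 := by
      field_simp at this; exact_mod_cast this
    exact_mod_cast h2
  -- basic integrality facts
  have hVa : V.Vge a 0 := Or.inr hva.ge
  have hVβ : V.Vge β 0 := hβ
  have hVγ : V.Vge γ 0 := hγ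
  have hVα : V.Vge α 0 := hα
  have hs : V.Vge (β ^ 2 - a * γ ^ 2) 0 := by
    have h1 : V.Vge (β ^ 2) 0 := by rw [sq]; simpa using DVal.Vge_mul hVβ hVβ
    have h2 : V.Vge (a * γ ^ 2) 0 := by
      rw [sq]
      simpa using DVal.Vge_mul hVa (DVal.Vge_mul hVγ hVγ)
    exact DVal.Vge_sub h1 h2
  have hϖs : V.Vge (ϖ * (β ^ 2 - a * γ ^ 2)) 1 := by
    have := DVal.Vge_mul (V := V) (Or.inr hvϖ.ge) hs
    simpa using this
  have hqnrd : qnrd a ϖ u = -(a * α ^ 2 + ϖ * (β ^ 2 - a * γ ^ 2)) := by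
    simp [qnrd, u]; ring
  -- α is a unit of O_K
  have hα0 : α ≠ 0 := by
    intro h0
    have he : qnrd a ϖ u = -(ϖ * (β ^ 2 - a * γ ^ 2)) := by rw [hqnrd, h0]; ring
    rcases hϖs with h | h
    · exact hn0 (by rw [he, h, neg_zero])
    · have hx : ϖ * (β ^ 2 - a * γ ^ 2) ≠ 0 := by
        intro hz; exact hn0 (by rw [he, hz, neg_zero])
      rw [he, DVal.nu_neg hx] at hvn0
      omega
  have hvα : V.ν α = 0 := by
    have hα_nonneg : 0 ≤ V.ν α := by
      rcases hVα with h | h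
      · exact absurd h hα0
      · exact h
    by_contra hne
    have h1 : 1 ≤ V.ν α := by omega
    have haα : V.Vge (a * α ^ 2 + ϖ * (β ^ 2 - a * γ ^ 2)) 1 := by
      refine DVal.Vge_add ?_ hϖs
      have h' : V.Vge (a * (α * α)) (0 + (1 + 1)) := DVal.Vge_mul (V := V) (Or.inr hva.ge)
        (DVal.Vge_mul (V := V) (Or.inr h1) (Or.inr h1))
      rw [sq]
      exact DVal.Vge_mono (by norm_num) h'
    rcases haα with h | h
    · exact hn0 (by rw [hqnrd, h, neg_zero])
    · have hx : a * α ^ 2 + ϖ * (β ^ 2 - a * γ ^ 2) ≠ 0 := by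
        intro hz; exact hn0 (by rw [hqnrd, hz, neg_zero])
      rw [hqnrd, DVal.nu_neg hx] at hvn0
      omega
  refine ⟨⟨hα0, hvα⟩, ?_⟩
  -- construct the square roots by Hensel's lemma
  have haα2 : a * α ^ 2 ≠ 0 := mul_ne_zero ha0 (pow_ne_zero 2 hα0)
  have hvaα2 : V.ν (a * α ^ 2) = 0 := by
    rw [V.ν_mul a (α ^ 2) ha0 (pow_ne_zero 2 hα0), sq,
      V.ν_mul α α hα0 hα0, hva, hvα]
    norm_num
  have hlam : V.Vge ((1 + ϖ * (β ^ 2 - a * γ ^ 2) / (a * α ^ 2)) - 1) 1 := by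
    have e1 : (1 + ϖ * (β ^ 2 - a * γ ^ 2) / (a * α ^ 2)) - 1
        = (ϖ * (β ^ 2 - a * γ ^ 2)) * (a * α ^ 2)⁻¹ := by ring
    rw [e1]
    have := DVal.Vge_mul hϖs (Or.inr (by rw [DVal.nu_inv haα2, hvaα2]))
    simpa using this
  obtain ⟨e, he2, he1⟩ := DVal.sqrt_exists hcomp hchar hlam
  have hX : V.Vge ((1 + e) / 2 - 1) 1 := by
    obtain ⟨h2ne, h2v⟩ := hchar
    have e1 : (1 + e) / 2 - 1 = (e - 1) * (2 : K)⁻¹ := by field_simp; ring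
    rw [e1]
    have := DVal.Vge_mul he1 (Or.inr (by rw [DVal.nu_inv h2ne, h2v]; norm_num : (0:ℤ) ≤ V.ν (2:K)⁻¹))
    simpa using this
  obtain ⟨p0, hp02, hp01⟩ := DVal.sqrt_exists hcomp hchar hX
  obtain ⟨hp0ne, hp0v⟩ := DVal.unit_of_near_one hp01
  obtain ⟨h2ne, h2v⟩ := hchar
  -- the key algebraic relations
  have H : a * α ^ 2 * e ^ 2 = a * α ^ 2 + ϖ * β ^ 2 - a * ϖ * γ ^ 2 := by
    rw [he2]; field_simp; ring
  have H2 : 2 * p0 ^ 2 = 1 + e := by rw [hp02]; field_simp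
  -- the isometry t
  set c : K := 2 * a * α * p0 with hc
  have hcne : c ≠ 0 := by
    simp only [hc]
    exact mul_ne_zero (mul_ne_zero (mul_ne_zero h2ne ha0) hα0) hp0ne
  set T : QuaternionAlgebra K a 0 ϖ := ⟨a * α * (1 + e), 0, a * γ, β⟩ with hT
  set t : QuaternionAlgebra K a 0 ϖ := c⁻¹ • T with ht
  -- t is a unit
  have htne : qnrd a ϖ t ≠ 0 := by
    intro h
    have h' : t.re ^ 2 - a * t.imI ^ 2 - ϖ * t.imJ ^ 2 + a * ϖ * t.imK ^ 2 = 0 := h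
    obtain ⟨h1, -, -, -⟩ := haniso _ _ _ _ h'
    have : t.re = c⁻¹ * (a * α * (1 + e)) := rfl
    rw [this] at h1
    have h1e : a * α * (1 + e) = 0 := by
      rcases mul_eq_zero.mp h1 with h | h
      · exact absurd (inv_eq_zero.mp h) hcne
      · exact h
    have : (1 : K) + e = 0 := by
      rcases mul_eq_zero.mp h1e with h | h
      · rcases mul_eq_zero.mp h with h | h
        · exact absurd h ha0
        · exact absurd h hα0
      · exact h
    rw [← H2] at this
    apply hp0ne
    have hsq : p0 ^ 2 = 0 := by
      rcases mul_eq_zero.mp this with h' | h'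
      · exact absurd h' h2ne
      · exact h'
    exact (pow_eq_zero_iff (by norm_num : 2 ≠ 0)).mp hsq
  have hunit : IsUnit t := by
    obtain ⟨hmul1, hmul2⟩ := qtau_mul_self (a := a) (b := ϖ) t
    refine ⟨⟨t, (qnrd a ϖ t)⁻¹ • qtau t, ?_, ?_⟩, rfl⟩
    · rw [mul_smul_comm, hmul1, smul_smul, inv_mul_cancel₀ htne, one_smul]
    · rw [smul_mul_assoc, hmul2, smul_smul, inv_mul_cancel₀ htne, one_smul]
  refine ⟨t, hunit, ?_⟩
  -- verify the isometry equation
  have hkey := key_alg a ϖ α β γ e H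
  have hscal : c⁻¹ * c⁻¹ * (2 * a ^ 2 * α ^ 2 * (1 + e)) = 1 := by
    rw [hc, ← H2]
    field_simp
  rw [ht, qtau_smul, smul_mul_assoc, smul_mul_assoc, mul_smul_comm, hkey,
    smul_smul, smul_smul, hscal, one_smul]
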